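/- For independent random variables ξ and ψ, each supported on [0, π/2] with density f(θ) = sin(2θ), the random variable Z = cos²(ξ − ψ) has cumulative distribution function F(z) = z − √(z(1−z))·arcsin(√z) for z ∈ (0,1). -/

import Mathlib

open MeasureTheory Real Set

noncomputable def nuCdf : Measure ℝ :=
  (volume.restrict (Icc 0 (π/2))).withDensity
    (fun θ => ENNReal.ofReal (Real.sin (2*θ)))

lemma nuCdf_apply {A : Set ℝ} (hA : MeasurableSet A) :
    nuCdf A = ∫⁻ θ in A ∩ Icc 0 (π/2), ENNReal.ofReal (Real.sin (2*θ)) := by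
  rw [nuCdf, withDensity_apply _ hA, Measure.restrict_restrict hA]

lemma nuCdf_Icc {a b : ℝ} (h0 : 0 ≤ a) (hab : a ≤ b) (hb : b ≤ π/2) :
    nuCdf (Icc a b) = ENNReal.ofReal (Real.sin b ^ 2 - Real.sin a ^ 2) := by
  have hsub : Icc a b ⊆ Icc 0 (π/2) := Icc_subset_Icc h0 hb
  rw [nuCdf_apply measurableSet_Icc, inter_eq_left.mpr hsub]
  have hint : IntegrableOn (fun θ => Real.sin (2*θ)) (Icc a b) volume :=
    (Continuous.integrableOn_Icc (by continuity))
  have hnn : 0 ≤ᵐ[volume.restrict (Icc a b)] (fun θ => Real.sin (2*θ)) := by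
    filter_upwards [ae_restrict_mem measurableSet_Icc] with θ hθ
    have h1 : 0 ≤ 2*θ := by nlinarith [hθ.1]
    have h2 : 2*θ ≤ π := by nlinarith [hθ.2]
    exact Real.sin_nonneg_of_nonneg_of_le_pi h1 h2
  rw [← MeasureTheory.ofReal_integral_eq_lintegral_ofReal hint hnn]
  congr 1
  rw [MeasureTheory.integral_Icc_eq_integral_Ioc,
      ← intervalIntegral.integral_of_le hab]
  rw [intervalIntegral.integral_comp_mul_left (fun x => Real.sin x) two_ne_zero]
  rw [integral_sin]
  have := Real.sin_sq_add_cos_sq a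
  have := Real.sin_sq_add_cos_sq b
  have := Real.cos_two_mul a
  have := Real.cos_two_mul b
  simp only [smul_eq_mul]
  nlinarith

lemma nuCdf_prob : IsProbabilityMeasure nuCdf := by
  constructor
  have : (univ : Set ℝ) ∩ Icc 0 (π/2) = Icc 0 (π/2) := univ_inter _
  rw [nuCdf_apply MeasurableSet.univ, this,
      ← (inter_eq_left.mpr (subset_refl (Icc (0:ℝ) (π/2)))),
      ← nuCdf_apply measurableSet_Icc,
      nuCdf_Icc le_rfl (by positivity) le_rfl]
  simp [Real.sin_pi_div_two]

lemma sin_add_add_sin_sub (p q : ℝ) :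
    Real.sin (p+q) + Real.sin (p-q) = 2 * Real.sin p * Real.cos q := by
  rw [Real.sin_add, Real.sin_sub]; ring

lemma trig_id (x t : ℝ) :
    Real.sin (2*x)/2 - Real.sin (4*x-2*t)/4 - Real.sin (2*t)/4
      = Real.sin (2*x) * Real.sin (x-t)^2 := by
  have h1 : Real.sin (4*x-2*t) + Real.sin (2*t)
      = 2 * Real.sin (2*x) * Real.cos (2*x - 2*t) := by
    have := sin_add_add_sin_sub (2*x) (2*x-2*t)
    rw [show (2:ℝ)*x + (2*x-2*t) = 4*x-2*t by ring,
        show (2:ℝ)*x - (2*x-2*t) = 2*t by ring] at this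
    exact this
  have h2 : Real.sin (x-t)^2 = 1 - Real.cos (x-t)^2 := by
    nlinarith [Real.sin_sq_add_cos_sq (x-t)]
  have h3 : Real.cos (2*x - 2*t) = 2 * Real.cos (x-t)^2 - 1 := by
    rw [show (2:ℝ)*x - 2*t = 2*(x-t) by ring, Real.cos_two_mul]
  linear_combination (-1/4) * h1 - Real.sin (2*x) * h2 - (Real.sin (2*x)/2) * h3

noncomputable def Fa (t x : ℝ) : ℝ :=
  -Real.cos (2*x)/4 + Real.cos (4*x-2*t)/16 - x * Real.sin (2*t)/4

lemma hasDeriv_Fa (t x : ℝ) :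
    HasDerivAt (Fa t) (Real.sin (2*x) * Real.sin (x-t)^2) x := by
  rw [← trig_id]
  unfold Fa
  have h1 : HasDerivAt (fun x : ℝ => 2*x) 2 x := by
    simpa using (hasDerivAt_id x).const_mul 2
  have h2 : HasDerivAt (fun x : ℝ => 4*x-2*t) 4 x := by
    simpa using ((hasDerivAt_id x).const_mul 4).sub_const (2*t)
  have c1 : HasDerivAt (fun x : ℝ => Real.cos (2*x)) (-(Real.sin (2*x))*2) x :=
    (Real.hasDerivAt_cos (2*x)).comp x h1
  have c2 : HasDerivAt (fun x : ℝ => Real.cos (4*x-2*t)) (-(Real.sin (4*x-2*t))*4) x :=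
    by have := (Real.hasDerivAt_cos (4*x-2*t)).comp x h2; exact this
  have c3 : HasDerivAt (fun x : ℝ => x * Real.sin (2*t)) (Real.sin (2*t)) x := by
    simpa using (hasDerivAt_id x).mul_const (Real.sin (2*t))
  refine (((c1.neg.div_const 4).add (c2.div_const 16)).sub (c3.div_const 4)).congr_deriv ?_
  ring

lemma J_eval (t : ℝ) :
    ∫ x in t..(π/2), Real.sin (2*x) * Real.sin (x-t)^2
      = 1/4 + Real.cos (2*t)/4 - (π/2 - t) * Real.sin (2*t)/4 := by
  have key : ∫ x in t..(π/2), Real.sin (2*x) * Real.sin (x-t)^2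
      = Fa t (π/2) - Fa t t := by
    apply intervalIntegral.integral_eq_sub_of_hasDerivAt
    · intro x _
      exact hasDeriv_Fa t x
    · apply Continuous.intervalIntegrable
      continuity
  rw [key]
  unfold Fa
  rw [show (2:ℝ)*(π/2) = π by ring, show (4:ℝ)*(π/2)-2*t = 2*π - 2*t by ring,
      show (4:ℝ)*t-2*t = 2*t by ring, Real.cos_pi, Real.cos_two_pi_sub]
  ring

noncomputable def gfun (t x : ℝ) : ℝ :=
  Real.sin (max (x - t) 0)^2 + Real.cos (min (x + t) (π/2))^2

lemma cont_sinmax (t : ℝ) : Continuous (fun x : ℝ => Real.sin (max (x - t) 0) ^ 2) :=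
  (Real.continuous_sin.comp ((continuous_id.sub continuous_const).max continuous_const)).pow 2

lemma cont_cosmin (t : ℝ) : Continuous (fun x : ℝ => Real.cos (min (x + t) (π/2)) ^ 2) :=
  (Real.continuous_cos.comp ((continuous_id.add continuous_const).min continuous_const)).pow 2

lemma cont_sin2 : Continuous (fun x : ℝ => Real.sin (2*x)) :=
  Real.continuous_sin.comp (continuous_const.mul continuous_id)

lemma gfun_cont (t : ℝ) : Continuous (gfun t) := by
  unfold gfun; exact (cont_sinmax t).add (cont_cosmin t)

lemma K_eval {t : ℝ} (ht0 : 0 ≤ t) (ht : t ≤ π/2) :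
    ∫ x in (0:ℝ)..(π/2), Real.sin (2*x) * gfun t x
      = 1/2 + Real.cos (2*t)/2 - (π/2 - t) * Real.sin (2*t)/2 := by
  have hc1 : Continuous (fun x => Real.sin (2*x) * Real.sin (max (x - t) 0)^2) :=
    cont_sin2.mul (cont_sinmax t)
  have hc2 : Continuous (fun x => Real.sin (2*x) * Real.cos (min (x + t) (π/2))^2) :=
    cont_sin2.mul (cont_cosmin t)
  have hsplit : ∫ x in (0:ℝ)..(π/2), Real.sin (2*x) * gfun t x
      = (∫ x in (0:ℝ)..(π/2), Real.sin (2*x) * Real.sin (max (x - t) 0)^2)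
        + ∫ x in (0:ℝ)..(π/2), Real.sin (2*x) * Real.cos (min (x + t) (π/2))^2 := by
    rw [← intervalIntegral.integral_add (hc1.intervalIntegrable _ _) (hc2.intervalIntegrable _ _)]
    congr 1; ext x; unfold gfun; ring
  rw [hsplit]
  have hrefl : (∫ x in (0:ℝ)..(π/2), Real.sin (2*x) * Real.cos (min (x + t) (π/2))^2)
      = ∫ x in (0:ℝ)..(π/2), Real.sin (2*x) * Real.sin (max (x - t) 0)^2 := by
    have hpt : ∀ x : ℝ, Real.sin (2*x) * Real.cos (min (x + t) (π/2))^2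
        = Real.sin (2*(π/2 - x)) * Real.sin (max ((π/2 - x) - t) 0)^2 := by
      intro x
      have hs : Real.sin (2*(π/2 - x)) = Real.sin (2*x) := by
        rw [show (2:ℝ)*(π/2-x) = π - 2*x by ring, Real.sin_pi_sub]
      rw [hs]
      rcases le_total (x + t) (π/2) with h | h
      · rw [min_eq_left h, max_eq_left (by linarith),
            show π/2 - x - t = π/2 - (x+t) by ring, Real.sin_pi_div_two_sub]
      · rw [min_eq_right h, max_eq_right (by linarith), Real.cos_pi_div_two, Real.sin_zero]
    have h1 : (∫ x in (0:ℝ)..(π/2), Real.sin (2*x) * Real.cos (min (x + t) (π/2))^2)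
        = ∫ x in (0:ℝ)..(π/2),
            (fun y => Real.sin (2*y) * Real.sin (max (y - t) 0)^2) (π/2 - x) := by
      apply intervalIntegral.integral_congr
      intro x _
      simpa using hpt x
    have h2 := intervalIntegral.integral_comp_sub_left (a := (0:ℝ)) (b := π/2)
      (fun y => Real.sin (2*y) * Real.sin (max (y - t) 0)^2) (π/2)
    rw [h1, h2]
    norm_num
  rw [hrefl]
  have hsplit2 : (∫ x in (0:ℝ)..(π/2), Real.sin (2*x) * Real.sin (max (x - t) 0)^2)
      = (∫ x in (0:ℝ)..t, Real.sin (2*x) * Real.sin (max (x - t) 0)^2)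
        + ∫ x in t..(π/2), Real.sin (2*x) * Real.sin (max (x - t) 0)^2 :=
    (intervalIntegral.integral_add_adjacent_intervals
      (hc1.intervalIntegrable 0 t) (hc1.intervalIntegrable t (π/2))).symm
  have hzero : (∫ x in (0:ℝ)..t, Real.sin (2*x) * Real.sin (max (x - t) 0)^2) = 0 := by
    rw [intervalIntegral.integral_congr (g := fun _ => (0:ℝ))]
    · simp
    · intro x hx
      rw [uIcc_of_le ht0] at hx
      show Real.sin (2*x) * Real.sin (max (x - t) 0)^2 = 0
      rw [max_eq_right (by linarith [hx.2] : x - t ≤ 0)]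
      simp
  have hmain : (∫ x in t..(π/2), Real.sin (2*x) * Real.sin (max (x - t) 0)^2)
      = ∫ x in t..(π/2), Real.sin (2*x) * Real.sin (x - t)^2 := by
    apply intervalIntegral.integral_congr
    intro x hx
    rw [uIcc_of_le ht] at hx
    show Real.sin (2*x) * Real.sin (max (x - t) 0)^2 = Real.sin (2*x) * Real.sin (x - t)^2
    rw [max_eq_left (by linarith [hx.1] : (0:ℝ) ≤ x - t)]
  rw [hsplit2, hzero, hmain, J_eval]
  ring

lemma cos_sq_le_iff {z x y : ℝ} (hz : z ∈ Ioo (0:ℝ) 1) (hx : x ∈ Icc 0 (π/2))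
    (hy : y ∈ Icc 0 (π/2)) :
    Real.cos (x - y)^2 ≤ z ↔ Real.arccos (Real.sqrt z) ≤ |x - y| := by
  have hs0 : 0 < Real.sqrt z := Real.sqrt_pos.mpr hz.1
  have hs1 : Real.sqrt z < 1 := by
    rw [show (1:ℝ) = Real.sqrt 1 by simp]
    exact Real.sqrt_lt_sqrt hz.1.le hz.2
  have hss : Real.sqrt z ^ 2 = z := Real.sq_sqrt hz.1.le
  have hmem : x - y ∈ Icc (-(π/2)) (π/2) :=
    ⟨by linarith [hx.1, hy.2], by linarith [hx.2, hy.1]⟩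
  have hcos0 : 0 ≤ Real.cos (x - y) := Real.cos_nonneg_of_mem_Icc hmem
  have habs : |x - y| ∈ Icc 0 π := by
    constructor
    · exact abs_nonneg _
    · have := abs_le.mpr ⟨hmem.1, hmem.2⟩
      linarith [Real.pi_pos]
  have harc : Real.arccos (Real.sqrt z) ∈ Icc 0 π :=
    ⟨Real.arccos_nonneg _, Real.arccos_le_pi _⟩
  have hca : Real.cos (x - y) = Real.cos |x - y| := (Real.cos_abs (x-y)).symm
  have h1 : Real.cos |x-y| ^2 ≤ z ↔ Real.cos |x-y| ≤ Real.sqrt z := by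
    nth_rewrite 1 [← hss]
    exact pow_le_pow_iff_left₀ (hca ▸ hcos0) hs0.le two_ne_zero
  have h2 : Real.cos |x-y| ≤ Real.sqrt z ↔ Real.arccos (Real.sqrt z) ≤ |x - y| := by
    constructor
    · intro h
      exact (Real.strictAntiOn_cos.le_iff_ge habs harc).mp
        (by rwa [Real.cos_arccos (by linarith) hs1.le])
    · intro h
      have := (Real.strictAntiOn_cos.le_iff_ge habs harc).mpr h
      rwa [Real.cos_arccos (by linarith) hs1.le] at this
  rw [hca]
  exact h1.trans h2

lemma inner_set {z x : ℝ} (hz : z ∈ Ioo (0:ℝ) 1) (hx : x ∈ Icc 0 (π/2)) :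
    {y | Real.cos (x - y)^2 ≤ z} ∩ Icc 0 (π/2)
      = Icc 0 (x - Real.arccos (Real.sqrt z)) ∪ Icc (x + Real.arccos (Real.sqrt z)) (π/2) := by
  set t := Real.arccos (Real.sqrt z) with htdef
  have ht0 : 0 ≤ t := Real.arccos_nonneg _
  ext y
  simp only [mem_inter_iff, mem_setOf_eq, mem_Icc, mem_union]
  constructor
  · rintro ⟨hcond, hy1, hy2⟩
    have := (cos_sq_le_iff hz hx ⟨hy1, hy2⟩).mp hcond
    rcases le_abs.mp this with h | h
    · left; constructor <;> linarith
    · right; rw [neg_sub] at h; constructor <;> linarith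
  · rintro (⟨h1, h2⟩ | ⟨h1, h2⟩)
    · have hy : y ∈ Icc 0 (π/2) := ⟨h1, by linarith [hx.2]⟩
      refine ⟨(cos_sq_le_iff hz hx hy).mpr ?_, hy.1, hy.2⟩
      rw [le_abs]; left; linarith
    · have hy : y ∈ Icc 0 (π/2) := ⟨by linarith [hx.1], h2⟩
      refine ⟨(cos_sq_le_iff hz hx hy).mpr ?_, hy.1, hy.2⟩
      rw [le_abs]; right; linarith

lemma inner_measure {z x : ℝ} (hz : z ∈ Ioo (0:ℝ) 1) (hx : x ∈ Icc 0 (π/2)) :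
    nuCdf {y | Real.cos (x - y)^2 ≤ z}
      = ENNReal.ofReal (gfun (Real.arccos (Real.sqrt z)) x) := by
  set t := Real.arccos (Real.sqrt z) with htdef
  have hs0 : 0 < Real.sqrt z := Real.sqrt_pos.mpr hz.1
  have ht0 : 0 ≤ t := Real.arccos_nonneg _
  have htpos : 0 < t := Real.arccos_pos.mpr (by
    rw [show (1:ℝ) = Real.sqrt 1 by simp]
    exact Real.sqrt_lt_sqrt hz.1.le hz.2)
  have hmeas : MeasurableSet {y : ℝ | Real.cos (x - y)^2 ≤ z} :=
    measurableSet_le (((Real.continuous_cos.comp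
      (continuous_const.sub continuous_id)).pow 2).measurable) measurable_const
  have e : nuCdf {y | Real.cos (x - y)^2 ≤ z}
      = nuCdf ({y | Real.cos (x - y)^2 ≤ z} ∩ Icc 0 (π/2)) := by
    rw [nuCdf_apply hmeas, nuCdf_apply (hmeas.inter measurableSet_Icc),
        inter_assoc, inter_self]
  rw [e, inner_set hz hx]
  have hdisj : Disjoint (Icc 0 (x - t)) (Icc (x + t) (π/2)) := by
    rw [Set.disjoint_left]
    intro y h1 h2
    have := h1.2
    have := h2.1
    linarith
  rw [measure_union hdisj measurableSet_Icc]
  have p1 : nuCdf (Icc 0 (x - t)) = ENNReal.ofReal (Real.sin (max (x - t) 0)^2) := by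
    rcases le_or_gt t x with h | h
    · rw [nuCdf_Icc le_rfl (by linarith) (by linarith [hx.2]),
          max_eq_left (by linarith : (0:ℝ) ≤ x - t)]
      simp
    · rw [Set.Icc_eq_empty (by intro hc; linarith), measure_empty,
          max_eq_right (by linarith : x - t ≤ 0)]
      simp
  have p2 : nuCdf (Icc (x + t) (π/2)) = ENNReal.ofReal (Real.cos (min (x + t) (π/2))^2) := by
    rcases le_or_gt (x + t) (π/2) with h | h
    · rw [nuCdf_Icc (by linarith [hx.1]) h le_rfl,
          min_eq_left h, Real.sin_pi_div_two]
      congr 1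
      nlinarith [Real.sin_sq_add_cos_sq (x + t)]
    · rw [Set.Icc_eq_empty (by intro hc; linarith), measure_empty,
          min_eq_right (by linarith : π/2 ≤ x + t), Real.cos_pi_div_two]
      simp
  rw [p1, p2, ← ENNReal.ofReal_add (by positivity) (by positivity)]
  rfl

instance : IsProbabilityMeasure nuCdf := nuCdf_prob

instance : SFinite nuCdf := by
  unfold nuCdf; infer_instance

lemma final_algebra {z : ℝ} (hz : z ∈ Ioo (0:ℝ) 1) :
    1/2 + Real.cos (2 * Real.arccos (Real.sqrt z))/2
      - (π/2 - Real.arccos (Real.sqrt z)) * Real.sin (2 * Real.arccos (Real.sqrt z))/2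
      = z - Real.sqrt (z*(1-z)) * Real.arcsin (Real.sqrt z) := by
  set s := Real.sqrt z with hsdef
  have hs0 : 0 ≤ s := Real.sqrt_nonneg _
  have hs1 : s ≤ 1 := by
    rw [hsdef, show (1:ℝ) = Real.sqrt 1 by simp]
    exact Real.sqrt_le_sqrt hz.2.le
  have hss : s ^ 2 = z := Real.sq_sqrt hz.1.le
  have hcos : Real.cos (Real.arccos s) = s := Real.cos_arccos (by linarith) hs1
  have hsin : Real.sin (Real.arccos s) = Real.sqrt (1 - z) := by
    rw [Real.sin_arccos, hss]
  have harcc : Real.arccos s = π/2 - Real.arcsin s :=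
    Real.arccos_eq_pi_div_two_sub_arcsin s
  have hsqrt : Real.sqrt (z*(1-z)) = s * Real.sqrt (1-z) := by
    rw [hsdef, ← Real.sqrt_mul hz.1.le]
  rw [Real.cos_two_mul, Real.sin_two_mul, hcos, hsin, harcc, hsqrt]
  have : s^2 = z := hss
  nlinarith [this]

/-- For i.i.d. ξ, ψ on [0, π/2] with density sin(2θ), the CDF of
Z = cos²(ξ − ψ) is F(z) = z − √(z(1−z))·arcsin(√z) for z ∈ (0,1). -/
theorem cdf_cos_sq_diff
    {Ω : Type*} [MeasurableSpace Ω] (μ : Measure Ω) [IsProbabilityMeasure μ]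
    (ξ ψ : Ω → ℝ) (hmξ : Measurable ξ) (hmψ : Measurable ψ)
    (hindep : ProbabilityTheory.IndepFun ξ ψ μ)
    (hξ : μ.map ξ = (volume.restrict (Icc 0 (π/2))).withDensity
      (fun θ => ENNReal.ofReal (Real.sin (2*θ))))
    (hψ : μ.map ψ = (volume.restrict (Icc 0 (π/2))).withDensity
      (fun θ => ENNReal.ofReal (Real.sin (2*θ)))) :
    ∀ z ∈ Ioo (0:ℝ) 1,
      μ {ω | Real.cos (ξ ω - ψ ω) ^ 2 ≤ z}
        = ENNReal.ofReal (z - Real.sqrt (z*(1-z)) * Real.arcsin (Real.sqrt z)) := by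
  intro z hz
  set t := Real.arccos (Real.sqrt z) with htdef
  have ht0 : 0 ≤ t := Real.arccos_nonneg _
  have htp : t ≤ π/2 := Real.arccos_le_pi_div_two.mpr (Real.sqrt_nonneg _)
  set S : Set (ℝ × ℝ) := {p | Real.cos (p.1 - p.2)^2 ≤ z} with hSdef
  have hS : MeasurableSet S :=
    measurableSet_le (((Real.continuous_cos.comp
      (continuous_fst.sub continuous_snd)).pow 2).measurable) measurable_const
  have hmap : μ.map (fun ω => (ξ ω, ψ ω)) = nuCdf.prod nuCdf := by
    rw [(ProbabilityTheory.indepFun_iff_map_prod_eq_prod_map_map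
      hmξ.aemeasurable hmψ.aemeasurable).mp hindep, hξ, hψ]
    rfl
  have hpre : {ω | Real.cos (ξ ω - ψ ω)^2 ≤ z} = (fun ω => (ξ ω, ψ ω)) ⁻¹' S := rfl
  rw [hpre, ← Measure.map_apply (hmξ.prodMk hmψ) hS, hmap, Measure.prod_apply hS]
  have hmeasf : Measurable (fun x => nuCdf (Prod.mk x ⁻¹' S)) :=
    measurable_measure_prodMk_left hS
  have step1 : ∫⁻ x, nuCdf (Prod.mk x ⁻¹' S) ∂nuCdf
      = ∫⁻ x in Icc 0 (π/2),
          ENNReal.ofReal (Real.sin (2*x)) * nuCdf (Prod.mk x ⁻¹' S) ∂volume := by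
    exact lintegral_withDensity_eq_lintegral_mul _ cont_sin2.measurable.ennreal_ofReal hmeasf
  rw [step1]
  have step2 : ∫⁻ x in Icc 0 (π/2),
        ENNReal.ofReal (Real.sin (2*x)) * nuCdf (Prod.mk x ⁻¹' S) ∂volume
      = ∫⁻ x in Icc 0 (π/2), ENNReal.ofReal (Real.sin (2*x) * gfun t x) ∂volume := by
    apply setLIntegral_congr_fun measurableSet_Icc
    intro x hx; beta_reduce
    have hpm : Prod.mk x ⁻¹' S = {y | Real.cos (x - y)^2 ≤ z} := rfl
    have hsin : 0 ≤ Real.sin (2*x) := by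
      apply Real.sin_nonneg_of_nonneg_of_le_pi
      · nlinarith [hx.1]
      · nlinarith [hx.2]
    rw [hpm, inner_measure hz hx, ← ENNReal.ofReal_mul hsin]
  rw [step2]
  have hcont : Continuous (fun x => Real.sin (2*x) * gfun t x) :=
    cont_sin2.mul (gfun_cont t)
  have hint : Integrable (fun x => Real.sin (2*x) * gfun t x)
      (volume.restrict (Icc 0 (π/2))) := hcont.integrableOn_Icc
  have hnn : 0 ≤ᵐ[volume.restrict (Icc 0 (π/2))] (fun x => Real.sin (2*x) * gfun t x) := by
    filter_upwards [ae_restrict_mem measurableSet_Icc] with x hx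
    have hsin : 0 ≤ Real.sin (2*x) := by
      apply Real.sin_nonneg_of_nonneg_of_le_pi
      · nlinarith [hx.1]
      · nlinarith [hx.2]
    have hg : 0 ≤ gfun t x := by unfold gfun; positivity
    positivity
  rw [← MeasureTheory.ofReal_integral_eq_lintegral_ofReal hint hnn]
  congr 1
  rw [MeasureTheory.integral_Icc_eq_integral_Ioc,
      ← intervalIntegral.integral_of_le (by positivity : (0:ℝ) ≤ π/2),
      K_eval ht0 htp, ← final_algebra hz]
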